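/- For l ∈ [1,c-1], write l = Σ_{i=1}^{k_l} j_i^{(l)}·s_i(a) with { j_i^{(l)} } the unique a-reduced family, and set x_l = Σ_{i=1}^{k_l} j_i^{(l)}·t_i(a,b,c) (x_0 = 0). Then x_l = min{ x ∈ G_{a,b}(c) : x ≡ b·l (mod c) }. -/

import Mathlib

/-- `sF a k = Σ_{i=0}^{k-1} a^i` (so `sF a 0 = 0`). -/
def sF (a k : ℕ) : ℕ := ∑ i ∈ Finset.range k, a ^ i

/-- `tF a b c k = a^k * c + b * sF a k`. -/
def tF (a b c k : ℕ) : ℕ := a ^ k * c + b * sF a k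

/-- A θ_{a,b}-semigroup: contains 0, closed under addition, and closed under
`x ↦ a*x + b` on nonzero elements. -/
def IsThetaSG (a b : ℕ) (S : Set ℕ) : Prop :=
  0 ∈ S ∧ (∀ x ∈ S, ∀ y ∈ S, x + y ∈ S) ∧ ∀ y ∈ S, y ≠ 0 → a * y + b ∈ S

/-- `Gset a b c` : the smallest θ_{a,b}-semigroup containing `c`. -/
def Gset (a b c : ℕ) : Set ℕ := ⋂₀ {S : Set ℕ | IsThetaSG a b S ∧ c ∈ S}

/-- `Hmon a b c` : additive submonoid generated by the `tF a b c k`. -/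
def Hmon (a b c : ℕ) : AddSubmonoid ℕ :=
  AddSubmonoid.closure {x | ∃ k, x = tF a b c k}

/-- `{j_i}_{i=1}^k` is `a`-reduced. -/
def AReduced (a k : ℕ) (j : ℕ → ℕ) : Prop :=
  (∀ i, 1 ≤ i → i ≤ k → j i ≤ a) ∧ j k ≠ 0 ∧
  ∀ m, 1 ≤ m → m ≤ k → j m = a → ∀ i, 1 ≤ i → i < m → j i = 0


def mval (a : ℕ) (M : Multiset ℕ) : ℕ := (M.map (sF a)).sum

lemma sF_succ (a k : ℕ) : sF a (k+1) = a * sF a k + 1 := by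
  simp [sF, Finset.sum_range_succ', pow_succ, Finset.mul_sum, mul_comm]

lemma sF_zero (a : ℕ) : sF a 0 = 0 := by simp [sF]

lemma sF_one (a : ℕ) : sF a 1 = 1 := by simp [sF]

lemma sF_mono (a : ℕ) : Monotone (sF a) := by
  intro m n h
  exact Finset.sum_le_sum_of_subset (Finset.range_subset_range.2 h)

lemma sF_pos (a k : ℕ) (hk : 1 ≤ k) : 1 ≤ sF a k := by
  calc 1 = sF a 1 := (sF_one a).symm
  _ ≤ sF a k := sF_mono a hk

lemma pow_eq_sF (a : ℕ) (ha : 1 ≤ a) (k : ℕ) : (a - 1) * sF a k + 1 = a ^ k := by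
  induction k with
  | zero => simp [sF_zero]
  | succ n ih =>
      rw [sF_succ, pow_succ]
      have : (a - 1) * (a * sF a n + 1) + 1 = a * ((a-1) * sF a n) + ((a-1) + 1) := by ring
      rw [this, Nat.sub_add_cancel ha, ← ih]
      ring

lemma tF_zero (a b c : ℕ) : tF a b c 0 = c := by simp [tF, sF_zero]

lemma tF_succ (a b c k : ℕ) : tF a b c (k+1) = a * tF a b c k + b := by
  simp only [tF, sF_succ, pow_succ]
  ring

lemma tF_pos (a b c k : ℕ) (ha : 1 ≤ a) (hc : 1 ≤ c) : 1 ≤ tF a b c k := by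
  have : 1 ≤ a ^ k * c := Nat.one_le_iff_ne_zero.2 (by positivity)
  unfold tF; omega

lemma tF_mod (a b c k : ℕ) : tF a b c k % c = (b * sF a k) % c := by
  unfold tF
  rw [mul_comm (a^k) c, Nat.mul_add_mod]

lemma mval_add (a : ℕ) (M N : Multiset ℕ) : mval a (M + N) = mval a M + mval a N := by
  simp [mval]

lemma mval_cons (a x : ℕ) (M : Multiset ℕ) : mval a (x ::ₘ M) = sF a x + mval a M := by
  simp [mval]

lemma mval_replicate (a n x : ℕ) : mval a (Multiset.replicate n x) = n * sF a x := by
  simp [mval, Multiset.map_replicate, Multiset.sum_replicate]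

lemma mval_erase (a p : ℕ) (M : Multiset ℕ) (hp : p ∈ M) :
    mval a M = sF a p + mval a (M.erase p) := by
  conv_lhs => rw [← Multiset.cons_erase hp]
  rw [mval_cons]

lemma card_erase' (p : ℕ) (M : Multiset ℕ) (hp : p ∈ M) :
    M.card = (M.erase p).card + 1 := by
  conv_lhs => rw [← Multiset.cons_erase hp]
  rw [Multiset.card_cons]

lemma decomp (K : ℕ) (M : Multiset ℕ) :
    M = Multiset.replicate (M.count K) K + M.filter (¬ · = K) := by
  have h1 : M.filter (· = K) = Multiset.replicate (M.count K) K := by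
    rw [Multiset.filter_eq']
  conv_lhs => rw [← Multiset.filter_add_not (· = K) M]
  rw [h1]

lemma exchange (a : ℕ) (ha : 1 ≤ a) : ∀ K, 1 ≤ K → ∀ M : Multiset ℕ,
    (∀ x ∈ M, 1 ≤ x ∧ x ≤ K) → sF a (K+1) ≤ mval a M →
    ∃ M' : Multiset ℕ, (∀ x ∈ M', 1 ≤ x ∧ x ≤ K) ∧
      mval a M' + sF a (K+1) = mval a M ∧ M'.card + 1 ≤ M.card := by
  intro K
  induction K using Nat.strong_induction_on with
  | _ K IH =>
  intro hK1
  rcases eq_or_lt_of_le hK1 with hK | hK2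
  · -- K = 1
    subst hK
    intro M hmem hval
    have hall : ∀ x ∈ M, x = 1 := fun x hx => by have := hmem x hx; omega
    have hv : mval a M = M.card := by
      unfold mval
      have : M.map (sF a) = Multiset.replicate M.card 1 := by
        rw [Multiset.eq_replicate]
        refine ⟨Multiset.card_map _ _, ?_⟩
        intro x hx
        obtain ⟨y, hy, rfl⟩ := Multiset.mem_map.1 hx
        rw [hall y hy, sF_one]
      rw [this, Multiset.sum_replicate, smul_eq_mul, mul_one]
    have hs2 : sF a (1+1) = a + 1 := by rw [sF_succ, sF_one]; ring
    refine ⟨Multiset.replicate (M.card - (a+1)) 1, ?_, ?_, ?_⟩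
    · intro x hx
      rw [Multiset.eq_of_mem_replicate hx]; omega
    · rw [mval_replicate, sF_one, hv, hs2]
      rw [hs2, hv] at hval; omega
    · rw [Multiset.card_replicate]
      rw [hs2, hv] at hval; omega
  · -- K ≥ 2
    have e1 : sF a (K+1) = a * sF a K + 1 := sF_succ a K
    have hsK : sF a K = a * sF a (K-1) + 1 := by
      conv_lhs => rw [show K = (K-1) + 1 by omega]
      rw [sF_succ]
    have direct : ∀ M : Multiset ℕ, (∀ x ∈ M, 1 ≤ x ∧ x ≤ K) → sF a (K+1) ≤ mval a M →
        a ≤ M.count K →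
        ∃ M' : Multiset ℕ, (∀ x ∈ M', 1 ≤ x ∧ x ≤ K) ∧
          mval a M' + sF a (K+1) = mval a M ∧ M'.card + 1 ≤ M.card := by
      intro M hmem hval hcount
      set A := M.count K with hA
      set Mlow := M.filter (¬ · = K) with hMlow
      have hdec : M = Multiset.replicate A K + Mlow := decomp K M
      have hmlow : ∀ x ∈ Mlow, (1 ≤ x ∧ x ≤ K) ∧ ¬ x = K := by
        intro x hx
        rw [hMlow, Multiset.mem_filter] at hx
        exact ⟨hmem x hx.1, by simpa using hx.2⟩
      have hvdec : mval a M = A * sF a K + mval a Mlow := by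
        conv_lhs => rw [hdec]
        rw [mval_add, mval_replicate]
      have hcard : M.card = A + Mlow.card := by
        conv_lhs => rw [hdec]
        simp
      rcases eq_or_lt_of_le hcount with hAa | hAa1
      · -- A = a : pick p in Mlow
        rw [← hAa] at hvdec hcard
        have hL : 1 ≤ mval a Mlow := by omega
        have hMl0 : Mlow ≠ 0 := by
          rintro h; rw [h] at hL; simp [mval] at hL
        obtain ⟨p, hp⟩ := Multiset.exists_mem_of_ne_zero hMl0
        have hp1 : 1 ≤ p := ((hmlow p hp).1).1
        have hpK : p ≤ K - 1 := by
          have := hmlow p hp; omega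
        have hverase : mval a Mlow = sF a p + mval a (Mlow.erase p) := mval_erase a p Mlow hp
        have hmemE : ∀ x ∈ Mlow.erase p, 1 ≤ x ∧ x ≤ K :=
          fun x hx => (hmlow x (Multiset.mem_of_mem_erase hx)).1
        have hcardE : Mlow.card = (Mlow.erase p).card + 1 := card_erase' p Mlow hp
        rcases eq_or_lt_of_le hp1 with hp1' | hp2
        · -- p = 1
          subst hp1'
          have hsp : sF a 1 = 1 := sF_one a
          exact ⟨Mlow.erase 1, hmemE, by omega, by omega⟩
        · -- p ≥ 2
          have hsp : sF a p = a * sF a (p-1) + 1 := by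
            conv_lhs => rw [show p = (p-1) + 1 by omega]
            rw [sF_succ]
          refine ⟨Multiset.replicate a (p-1) + Mlow.erase p, ?_, ?_, ?_⟩
          · intro x hx
            rcases Multiset.mem_add.1 hx with hx | hx
            · rw [Multiset.eq_of_mem_replicate hx]; omega
            · exact hmemE x hx
          · rw [mval_add, mval_replicate]
            omega
          · simp only [Multiset.card_add, Multiset.card_replicate]
            omega
      · -- A ≥ a + 1
        have hbr : A * sF a K = (A - (a+1)) * sF a K + (a+1) * sF a K := by
          rw [← Nat.add_mul, Nat.sub_add_cancel (by omega)]
        have hbr2 : (a+1) * sF a K = a * sF a K + sF a K := by ring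
        refine ⟨Multiset.replicate a (K-1) + (Multiset.replicate (A - (a+1)) K + Mlow), ?_, ?_, ?_⟩
        · intro x hx
          rcases Multiset.mem_add.1 hx with hx | hx
          · rw [Multiset.eq_of_mem_replicate hx]; omega
          · rcases Multiset.mem_add.1 hx with hx | hx
            · rw [Multiset.eq_of_mem_replicate hx]; omega
            · exact (hmlow x hx).1
        · rw [mval_add, mval_add, mval_replicate, mval_replicate]
          omega
        · simp only [Multiset.card_add, Multiset.card_replicate]
          omega
    have inner : ∀ d, ∀ M : Multiset ℕ, (∀ x ∈ M, 1 ≤ x ∧ x ≤ K) → sF a (K+1) ≤ mval a M →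
        a - M.count K ≤ d →
        ∃ M' : Multiset ℕ, (∀ x ∈ M', 1 ≤ x ∧ x ≤ K) ∧
          mval a M' + sF a (K+1) = mval a M ∧ M'.card + 1 ≤ M.card := by
      intro d
      induction d with
      | zero => exact fun M hmem hval hd => direct M hmem hval (by omega)
      | succ n ihd =>
          intro M hmem hval hd
          by_cases hc : a ≤ M.count K
          · exact direct M hmem hval hc
          · push_neg at hc
            set A := M.count K with hA
            set Mlow := M.filter (¬ · = K) with hMlow
            have hdec : M = Multiset.replicate A K + Mlow := decomp K M
            have hmlow : ∀ x ∈ Mlow, (1 ≤ x ∧ x ≤ K - 1) := by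
              intro x hx
              rw [hMlow, Multiset.mem_filter] at hx
              have h1 := hmem x hx.1
              have h2 : ¬ x = K := by simpa using hx.2
              omega
            have hvdec : mval a M = A * sF a K + mval a Mlow := by
              conv_lhs => rw [hdec]
              rw [mval_add, mval_replicate]
            have hcard : M.card = A + Mlow.card := by
              conv_lhs => rw [hdec]
              simp
            have hb1 : A * sF a K ≤ (a-1) * sF a K :=
              Nat.mul_le_mul_right _ (by omega)
            have hb2 : (a - 1) * sF a K + sF a K = a * sF a K := by
              rw [← Nat.succ_mul]
              congr 1
              omega
            have hvlow : sF a ((K-1)+1) ≤ mval a Mlow := by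
              rw [show (K-1)+1 = K by omega]
              omega
            obtain ⟨M2, hm2, hv2, hc2⟩ := IH (K-1) (by omega) (by omega) Mlow hmlow hvlow
            rw [show (K-1)+1 = K by omega] at hv2
            have hm1mem : ∀ x ∈ Multiset.replicate (A+1) K + M2, 1 ≤ x ∧ x ≤ K := by
              intro x hx
              rcases Multiset.mem_add.1 hx with hx | hx
              · rw [Multiset.eq_of_mem_replicate hx]; omega
              · have := hm2 x hx; omega
            have hbr : (A+1) * sF a K = A * sF a K + sF a K := by ring
            have hv1 : mval a (Multiset.replicate (A+1) K + M2) = mval a M := by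
              rw [mval_add, mval_replicate]
              omega
            have hcount1 : (Multiset.replicate (A+1) K + M2).count K = A + 1 := by
              rw [Multiset.count_add, Multiset.count_replicate]
              have h0 : M2.count K = 0 := by
                rw [Multiset.count_eq_zero]
                intro hx
                have := hm2 K hx; omega
              simp [h0]
            have hcard1 : (Multiset.replicate (A+1) K + M2).card ≤ M.card := by
              simp only [Multiset.card_add, Multiset.card_replicate]
              omega
            obtain ⟨M', hm', hv', hc'⟩ := ihd (Multiset.replicate (A+1) K + M2) hm1mem
              (by rw [hv1]; exact hval) (by rw [hcount1]; omega)
            exact ⟨M', hm', by rw [hv', hv1], by omega⟩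
    exact fun M hmem hval => inner a M hmem hval (by omega)

lemma tF_mem (a b c : ℕ) (ha : 1 ≤ a) (hc : 1 ≤ c) (S : Set ℕ)
    (hS : IsThetaSG a b S) (hcS : c ∈ S) (k : ℕ) : tF a b c k ∈ S := by
  induction k with
  | zero => rw [tF_zero]; exact hcS
  | succ n ih =>
      rw [tF_succ]
      exact hS.2.2 _ ih (by have := tF_pos a b c n ha hc; omega)

lemma nsmul_mem_theta (a b : ℕ) (S : Set ℕ) (hS : IsThetaSG a b S)
    (x : ℕ) (hx : x ∈ S) (n : ℕ) : n * x ∈ S := by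
  induction n with
  | zero => simpa using hS.1
  | succ m ih => rw [Nat.succ_mul]; exact hS.2.1 _ ih _ hx

lemma sum_mem_theta (a b : ℕ) (S : Set ℕ) (hS : IsThetaSG a b S)
    (t : Finset ℕ) (f : ℕ → ℕ) (hf : ∀ i ∈ t, f i ∈ S) :
    (∑ i ∈ t, f i) ∈ S := by
  classical
  induction t using Finset.induction with
  | empty => simpa using hS.1
  | insert x t hnot ih =>
      rw [Finset.sum_insert hnot]
      exact hS.2.1 _ (hf _ (Finset.mem_insert_self _ _)) _
        (ih fun i hi => hf i (Finset.mem_insert_of_mem hi))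

lemma msum_mem_theta (a b : ℕ) (S : Set ℕ) (hS : IsThetaSG a b S)
    (M : Multiset ℕ) (hf : ∀ x ∈ M, x ∈ S) : M.sum ∈ S := by
  induction M using Multiset.induction with
  | empty => simpa using hS.1
  | cons x M ih =>
      rw [Multiset.sum_cons]
      exact hS.2.1 _ (hf _ (Multiset.mem_cons_self _ _)) _
        (ih fun y hy => hf y (Multiset.mem_cons_of_mem hy))

lemma smul_map_sum (f : ℕ → ℕ) (n : ℕ) (M : Multiset ℕ) :
    ((n • M).map f).sum = n * (M.map f).sum := by
  induction n with
  | zero => simp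
  | succ m ih => rw [succ_nsmul, Multiset.map_add, Multiset.sum_add, ih]; ring

lemma gset_rep (a b c : ℕ) (x : ℕ) (hx : x ∈ Gset a b c) :
    ∃ M : Multiset ℕ, x = (M.map (tF a b c)).sum := by
  have h : x ∈ {y : ℕ | ∃ M : Multiset ℕ, y = (M.map (tF a b c)).sum} := by
    apply hx
    refine ⟨⟨⟨0, by simp⟩, ?_, ?_⟩, ⟨{0}, by simp [tF_zero]⟩⟩
    · rintro u ⟨M1, rfl⟩ v ⟨M2, rfl⟩
      exact ⟨M1 + M2, by rw [Multiset.map_add, Multiset.sum_add]⟩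
    · rintro u ⟨M, rfl⟩ hu
      have hM : M ≠ 0 := by rintro rfl; simp at hu
      obtain ⟨κ, hκ⟩ := Multiset.exists_mem_of_ne_zero hM
      refine ⟨(κ+1) ::ₘ (a • (M.erase κ)), ?_⟩
      have h2 : (M.map (tF a b c)).sum
          = tF a b c κ + ((M.erase κ).map (tF a b c)).sum := by
        conv_lhs => rw [← Multiset.cons_erase hκ]
        rw [Multiset.map_cons, Multiset.sum_cons]
      rw [Multiset.map_cons, Multiset.sum_cons, smul_map_sum, tF_succ, h2]
      ring
  exact h

-- single descent step
lemma descent_one (a b c : ℕ) (M : Multiset ℕ)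
    (hv : 1 ≤ (M.map (sF a)).sum) :
    ∃ M' : Multiset ℕ, (M'.map (sF a)).sum + 1 = (M.map (sF a)).sum ∧
      (M'.map (tF a b c)).sum ≤ (M.map (tF a b c)).sum := by
  have hex : ∃ κ ∈ M, sF a κ ≠ 0 := by
    by_contra h
    push_neg at h
    have : (M.map (sF a)).sum = 0 := by
      apply Multiset.sum_eq_zero
      intro x hx
      obtain ⟨κ, hκ, rfl⟩ := Multiset.mem_map.1 hx
      exact h κ hκ
    omega
  obtain ⟨κ, hκ, hκ0⟩ := hex
  have hκ1 : 1 ≤ κ := by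
    rcases Nat.eq_zero_or_pos κ with h | h
    · subst h; rw [sF_zero] at hκ0; omega
    · exact h
  have hsv : (M.map (sF a)).sum = sF a κ + ((M.erase κ).map (sF a)).sum := by
    conv_lhs => rw [← Multiset.cons_erase hκ]
    rw [Multiset.map_cons, Multiset.sum_cons]
  have hst : (M.map (tF a b c)).sum
      = tF a b c κ + ((M.erase κ).map (tF a b c)).sum := by
    conv_lhs => rw [← Multiset.cons_erase hκ]
    rw [Multiset.map_cons, Multiset.sum_cons]
  rcases eq_or_lt_of_le hκ1 with h1 | h2
  · -- κ = 1 : drop it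
    refine ⟨M.erase κ, ?_, ?_⟩
    · rw [hsv, ← h1, sF_one]; omega
    · rw [hst]; omega
  · -- κ ≥ 2 : replace by a copies of κ-1
    obtain ⟨κ', rfl⟩ : ∃ κ', κ = κ' + 1 := ⟨κ - 1, by omega⟩
    refine ⟨a • {κ'} + M.erase (κ'+1), ?_, ?_⟩
    · rw [Multiset.map_add, Multiset.sum_add, smul_map_sum, hsv, sF_succ]
      simp only [Multiset.map_singleton, Multiset.sum_singleton]
      omega
    · rw [Multiset.map_add, Multiset.sum_add, smul_map_sum, hst, tF_succ]
      simp only [Multiset.map_singleton, Multiset.sum_singleton]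
      omega

lemma descent (a b c : ℕ) (d : ℕ) : ∀ (M : Multiset ℕ) (v : ℕ),
    (M.map (sF a)).sum = v + d →
    ∃ M' : Multiset ℕ, (M'.map (sF a)).sum = v ∧
      (M'.map (tF a b c)).sum ≤ (M.map (tF a b c)).sum := by
  induction d with
  | zero => exact fun M v h => ⟨M, by omega, le_rfl⟩
  | succ n ih =>
      intro M v h
      obtain ⟨M1, h1, h2⟩ := descent_one a b c M (by omega)
      obtain ⟨M', h3, h4⟩ := ih M1 v (by omega)
      exact ⟨M', h3, le_trans h4 h2⟩

-- upper bound for "reduced-like" digit families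
lemma red_upper (a : ℕ) (ha : 1 ≤ a) (k : ℕ) (j : ℕ → ℕ)
    (hd : ∀ i, 1 ≤ i → i ≤ k → j i ≤ a)
    (hcond : ∀ m, 1 ≤ m → m ≤ k → j m = a → ∀ i, 1 ≤ i → i < m → j i = 0) :
    (∑ i ∈ Finset.Icc 1 k, j i * sF a i) ≤ a * sF a k := by
  induction k with
  | zero => simp [sF_zero]
  | succ n ih =>
      rw [Finset.sum_Icc_succ_top (by omega : 1 ≤ n + 1)]
      have hlow := ih (fun i h1 h2 => hd i h1 (by omega))
        (fun m h1 h2 hm => hcond m h1 (by omega) hm)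
      by_cases hja : j (n+1) = a
      · have hall : ∀ i ∈ Finset.Icc 1 n, j i * sF a i = 0 := by
          intro i hi
          rw [Finset.mem_Icc] at hi
          rw [hcond (n+1) (by omega) le_rfl hja i hi.1 (by omega)]
          ring
        rw [Finset.sum_eq_zero hall, hja]
        omega
      · have hja' : j (n+1) ≤ a - 1 := by
          have := hd (n+1) (by omega) le_rfl
          omega
        have h1 : j (n+1) * sF a (n+1) ≤ (a-1) * sF a (n+1) :=
          Nat.mul_le_mul_right _ hja'
        have h2 : (a-1) * sF a (n+1) + sF a (n+1) = a * sF a (n+1) := by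
          rw [← Nat.succ_mul]
          congr 1
          omega
        have h3 := sF_succ a n
        omega

lemma red_lower (a : ℕ) (k : ℕ) (hk : 1 ≤ k) (j : ℕ → ℕ) (hjk : j k ≠ 0) :
    sF a k ≤ ∑ i ∈ Finset.Icc 1 k, j i * sF a i := by
  have hmem : k ∈ Finset.Icc 1 k := by simp [hk]
  have h1 : j k * sF a k ≤ ∑ i ∈ Finset.Icc 1 k, j i * sF a i :=
    Finset.single_le_sum (f := fun i => j i * sF a i) (fun i _ => Nat.zero_le _) hmem
  have h2 : sF a k ≤ j k * sF a k := Nat.le_mul_of_pos_left _ (by omega)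
  omega

lemma red_split (k : ℕ) (hk : 1 ≤ k) (g : ℕ → ℕ) :
    ∑ i ∈ Finset.Icc 1 k, g i
      = (∑ i ∈ Finset.Icc 1 (k-1), g i) + g k := by
  conv_lhs => rw [show k = (k-1)+1 by omega]
  rw [Finset.sum_Icc_succ_top (by omega : 1 ≤ (k-1)+1)]
  rw [show (k-1)+1 = k by omega]

-- base case : value = sF a k implies digit sum is 1
lemma red_base (a : ℕ) (ha : 1 ≤ a) (k : ℕ) (hk : 1 ≤ k) (j : ℕ → ℕ)
    (hj : AReduced a k j) (hv : (∑ i ∈ Finset.Icc 1 k, j i * sF a i) = sF a k) :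
    (∑ i ∈ Finset.Icc 1 k, j i) = 1 := by
  obtain ⟨hd, hjk, hcond⟩ := hj
  have hsk := sF_pos a k hk
  have hsplit := red_split k hk (fun i => j i * sF a i)
  have hjk1 : j k = 1 := by
    by_contra h
    have h2 : 2 ≤ j k := by omega
    have : 2 * sF a k ≤ j k * sF a k := Nat.mul_le_mul_right _ h2
    omega
  rw [hjk1, one_mul] at hsplit
  have hlow : ∀ i ∈ Finset.Icc 1 (k-1), j i * sF a i = 0 := by
    intro i hi
    rw [Finset.mem_Icc] at hi
    have hsum0 : (∑ i ∈ Finset.Icc 1 (k-1), j i * sF a i) = 0 := by omega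
    exact Finset.sum_eq_zero_iff.1 hsum0 i (Finset.mem_Icc.2 hi)
  have hlow' : ∀ i ∈ Finset.Icc 1 (k-1), j i = 0 := by
    intro i hi
    have := hlow i hi
    rw [Finset.mem_Icc] at hi
    have := sF_pos a i hi.1
    rcases Nat.mul_eq_zero.1 (hlow i (Finset.mem_Icc.2 hi)) with h | h
    · exact h
    · omega
  have hs2 := red_split k hk j
  have hz : (∑ i ∈ Finset.Icc 1 (k-1), j i) = 0 := Finset.sum_eq_zero hlow'
  omega

-- decrement lemma
lemma red_dec (a : ℕ) (ha : 1 ≤ a) (k : ℕ) (hk : 1 ≤ k) (j : ℕ → ℕ)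
    (hj : AReduced a k j) (hgt : sF a k < ∑ i ∈ Finset.Icc 1 k, j i * sF a i) :
    ∃ k' j', 1 ≤ k' ∧ k' ≤ k ∧ AReduced a k' j' ∧
      (∑ i ∈ Finset.Icc 1 k', j' i * sF a i) + sF a k = ∑ i ∈ Finset.Icc 1 k, j i * sF a i ∧
      (∑ i ∈ Finset.Icc 1 k', j' i) + 1 = ∑ i ∈ Finset.Icc 1 k, j i := by
  obtain ⟨hd, hjk, hcond⟩ := hj
  have hsplitv := red_split k hk (fun i => j i * sF a i)
  have hsplits := red_split k hk j
  by_cases h2 : 2 ≤ j k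
  · -- decrement top digit
    refine ⟨k, Function.update j k (j k - 1), hk, le_rfl, ⟨?_, ?_, ?_⟩, ?_, ?_⟩
    · intro i h1 hik
      by_cases hik' : i = k
      · subst hik'
        rw [Function.update_self]
        have := hd i h1 hik
        omega
      · rw [Function.update_of_ne hik']
        exact hd i h1 hik
    · rw [Function.update_self]
      omega
    · intro m h1 hmk hma i hi1 him
      have hmk' : m ≠ k := by
        intro h
        subst h
        rw [Function.update_self] at hma
        have := hd m h1 hmk
        omega
      rw [Function.update_of_ne hmk'] at hma
      rw [Function.update_of_ne (by omega : i ≠ k)]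
      exact hcond m h1 hmk hma i hi1 him
    · rw [red_split k hk (fun i => Function.update j k (j k - 1) i * sF a i)]
      have he : ∀ i ∈ Finset.Icc 1 (k-1), Function.update j k (j k - 1) i * sF a i = j i * sF a i := by
        intro i hi
        rw [Finset.mem_Icc] at hi
        rw [Function.update_of_ne (by omega : i ≠ k)]
      rw [Finset.sum_congr rfl he, Function.update_self]
      have hb : (j k - 1) * sF a k + sF a k = j k * sF a k := by
        rw [← Nat.succ_mul]
        congr 1
        omega
      omega
    · rw [red_split k hk (Function.update j k (j k - 1))]
      have he : ∀ i ∈ Finset.Icc 1 (k-1), Function.update j k (j k - 1) i = j i := by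
        intro i hi
        rw [Finset.mem_Icc] at hi
        rw [Function.update_of_ne (by omega : i ≠ k)]
      rw [Finset.sum_congr rfl he, Function.update_self]
      have heta : ((Finset.Icc 1 (k-1)).sum j) = ∑ i ∈ Finset.Icc 1 (k-1), j i := rfl
      omega
  · -- j k = 1 : top drops to previous nonzero digit
    have hjk1 : j k = 1 := by omega
    rw [hjk1, one_mul] at hsplitv
    have hlowpos : 1 ≤ ∑ i ∈ Finset.Icc 1 (k-1), j i * sF a i := by omega
    have hne : ∃ i ∈ Finset.Icc 1 (k-1), j i * sF a i ≠ 0 := by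
      by_contra h
      push_neg at h
      rw [Finset.sum_eq_zero h] at hlowpos
      omega
    obtain ⟨i0, hi0mem, hi0⟩ := hne
    set T := (Finset.Icc 1 (k-1)).filter (fun i => j i ≠ 0) with hT
    have hTne : T.Nonempty := by
      refine ⟨i0, ?_⟩
      rw [hT, Finset.mem_filter]
      exact ⟨hi0mem, by intro h; rw [h] at hi0; simp at hi0⟩
    set k' := T.max' hTne with hk'
    have hk'T : k' ∈ T := T.max'_mem hTne
    have hk'mem : k' ∈ Finset.Icc 1 (k-1) := (Finset.mem_filter.1 hk'T).1
    have hk'ne : j k' ≠ 0 := (Finset.mem_filter.1 hk'T).2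
    rw [Finset.mem_Icc] at hk'mem
    have hmax : ∀ i, k' < i → i ≤ k - 1 → j i = 0 := by
      intro i hik hik1
      by_contra h
      have : i ∈ T := Finset.mem_filter.2 ⟨Finset.mem_Icc.2 ⟨by omega, hik1⟩, h⟩
      have := T.le_max' i this
      omega
    have hsub : Finset.Icc 1 k' ⊆ Finset.Icc 1 (k-1) := by
      apply Finset.Icc_subset_Icc le_rfl
      omega
    have hval' : ∀ f : ℕ → ℕ, (∑ i ∈ Finset.Icc 1 (k-1), j i * f i) = ∑ i ∈ Finset.Icc 1 k', j i * f i := by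
      intro f
      symm
      apply Finset.sum_subset hsub
      intro x hx hnx
      rw [Finset.mem_Icc] at hx
      rw [Finset.mem_Icc] at hnx
      rw [hmax x (by omega) (by omega)]
      ring
    refine ⟨k', j, hk'mem.1, by omega, ⟨?_, hk'ne, ?_⟩, ?_, ?_⟩
    · intro i h1 hik
      exact hd i h1 (by omega)
    · intro m h1 hmk hma i hi1 him
      exact hcond m h1 (by omega) hma i hi1 him
    · have h1 := hval' (sF a)
      omega
    · have h1 : (∑ i ∈ Finset.Icc 1 (k-1), j i) = ∑ i ∈ Finset.Icc 1 k', j i := by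
        symm
        apply Finset.sum_subset hsub
        intro x hx hnx
        rw [Finset.mem_Icc] at hx
        rw [Finset.mem_Icc] at hnx
        exact hmax x (by omega) (by omega)
      omega

-- core minimality
lemma Tprime (a : ℕ) (ha : 1 ≤ a) : ∀ l, 1 ≤ l → ∀ k, 1 ≤ k → ∀ j : ℕ → ℕ, AReduced a k j →
    (∑ i ∈ Finset.Icc 1 k, j i * sF a i) = l → ∀ M : Multiset ℕ,
    (∀ x ∈ M, 1 ≤ x) → mval a M = l → (∑ i ∈ Finset.Icc 1 k, j i) ≤ M.card := by
  intro l
  induction l using Nat.strong_induction_on with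
  | _ l IH =>
  intro hl1 k hk j hj hval M hmem hmval
  have hlow : sF a k ≤ l := hval ▸ red_lower a k hk j hj.2.1
  have hup : l ≤ a * sF a k := hval ▸ red_upper a ha k j hj.1 hj.2.2
  have hM0 : M ≠ 0 := by
    rintro rfl
    simp [mval] at hmval
    omega
  have hcard1 : 1 ≤ M.card := Multiset.card_pos.2 hM0
  have hbound : ∀ x ∈ M, x ≤ k := by
    intro x hx
    by_contra h
    push_neg at h
    have h1 : sF a (k+1) ≤ sF a x := sF_mono a h
    have h2 : sF a x ≤ mval a M := by
      rw [mval_erase a x M hx]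
      omega
    have h3 := sF_succ a k
    have h4 := sF_pos a k hk
    omega
  rcases eq_or_lt_of_le hk with hk1 | hk2
  · -- k = 1
    have hall : ∀ x ∈ M, x = 1 := fun x hx => by
      have := hmem x hx; have := hbound x hx; omega
    have hmv : mval a M = M.card := by
      unfold mval
      have : M.map (sF a) = Multiset.replicate M.card 1 := by
        rw [Multiset.eq_replicate]
        refine ⟨Multiset.card_map _ _, ?_⟩
        intro x hx
        obtain ⟨y, hy, rfl⟩ := Multiset.mem_map.1 hx
        rw [hall y hy, sF_one]
      rw [this, Multiset.sum_replicate, smul_eq_mul, mul_one]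
    rw [← hk1] at hval ⊢
    rw [Finset.Icc_self, Finset.sum_singleton] at hval ⊢
    rw [sF_one, mul_one] at hval
    omega
  · -- k ≥ 2
    rcases eq_or_lt_of_le hlow with hbase | hgt
    · have := red_base a ha k hk j hj (by omega)
      omega
    · obtain ⟨k', j', hk'1, hk'k, hj', hval', hsum'⟩ := red_dec a ha k hk j hj (by omega)
      have hlpos : 1 ≤ l - sF a k := by omega
      have hval'' : (∑ i ∈ Finset.Icc 1 k', j' i * sF a i) = l - sF a k := by omega
      have hlt : l - sF a k < l := by
        have := sF_pos a k hk
        omega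
      by_cases hkM : k ∈ M
      · have herase : mval a (M.erase k) = l - sF a k := by
          have := mval_erase a k M hkM
          omega
        have hmemE : ∀ x ∈ M.erase k, 1 ≤ x := fun x hx => hmem x (Multiset.mem_of_mem_erase hx)
        have := IH (l - sF a k) hlt hlpos k' hk'1 j' hj' hval'' (M.erase k) hmemE herase
        have := card_erase' k M hkM
        omega
      · have hmem2 : ∀ x ∈ M, 1 ≤ x ∧ x ≤ k - 1 := by
          intro x hx
          have h1 := hmem x hx
          have h2 := hbound x hx
          have : x ≠ k := fun h => hkM (h ▸ hx)
          omega
        have hexval : sF a ((k-1)+1) ≤ mval a M := by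
          rw [show (k-1)+1 = k by omega, hmval]
          omega
        obtain ⟨M', hm', hv', hc'⟩ := exchange a ha (k-1) (by omega) M hmem2 hexval
        rw [show (k-1)+1 = k by omega] at hv'
        have hm4 : mval a M' = l - sF a k := by omega
        have := IH (l - sF a k) hlt hlpos k' hk'1 j' hj' hval'' M'
          (fun x hx => (hm' x hx).1) hm4
        omega

lemma cost_split (a b c : ℕ) (M : Multiset ℕ) :
    (M.map (tF a b c)).sum = c * (M.map (a ^ ·)).sum + b * (M.map (sF a)).sum := by
  have : (M.map (tF a b c)).sum
      = (M.map (fun κ => c * a ^ κ + b * sF a κ)).sum := by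
    congr 1
    apply Multiset.map_congr rfl
    intro κ _
    unfold tF
    ring
  rw [this, Multiset.sum_map_add, Multiset.sum_map_mul_left, Multiset.sum_map_mul_left]

lemma pcount (a : ℕ) (ha : 1 ≤ a) (M : Multiset ℕ) :
    (M.map (a ^ ·)).sum = (a - 1) * (M.map (sF a)).sum + M.card := by
  have : (M.map (a ^ ·)).sum = (M.map (fun κ => (a-1) * sF a κ + 1)).sum := by
    congr 1
    apply Multiset.map_congr rfl
    intro κ _
    rw [pow_eq_sF a ha κ]
  rw [this, Multiset.sum_map_add, Multiset.sum_map_mul_left]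
  congr 1
  have : M.map (fun _ => (1:ℕ)) = Multiset.replicate M.card 1 := Multiset.map_const' M 1
  rw [this, Multiset.sum_replicate, smul_eq_mul, mul_one]

theorem stmt15 (a b c : ℕ) (ha : 0 < a) (hb : 0 < b) (hc : 2 ≤ c)
    (hcop : Nat.gcd b c = 1) (l : ℕ) (hl1 : 1 ≤ l) (hl2 : l ≤ c - 1)
    (k : ℕ) (hk : 1 ≤ k) (j : ℕ → ℕ) (hj : AReduced a k j)
    (hsum : l = ∑ i ∈ Finset.Icc 1 k, j i * sF a i) :
    IsLeast {x : ℕ | x ∈ Gset a b c ∧ x % c = (b * l) % c}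
      (∑ i ∈ Finset.Icc 1 k, j i * tF a b c i) := by
  have hc1 : 1 ≤ c := by omega
  have hxl : (∑ i ∈ Finset.Icc 1 k, j i * tF a b c i)
      = c * ((a-1) * l + ∑ i ∈ Finset.Icc 1 k, j i) + b * l := by
    have h1 : ∀ i ∈ Finset.Icc 1 k, j i * tF a b c i
        = c * ((a-1) * (j i * sF a i) + j i) + b * (j i * sF a i) := by
      intro i _
      unfold tF
      rw [← pow_eq_sF a ha i]
      ring
    calc (∑ i ∈ Finset.Icc 1 k, j i * tF a b c i)
        = ∑ i ∈ Finset.Icc 1 k, (c * ((a-1) * (j i * sF a i) + j i) + b * (j i * sF a i)) :=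
          Finset.sum_congr rfl h1
      _ = (∑ i ∈ Finset.Icc 1 k, c * ((a-1) * (j i * sF a i) + j i))
          + ∑ i ∈ Finset.Icc 1 k, b * (j i * sF a i) := Finset.sum_add_distrib
      _ = c * (∑ i ∈ Finset.Icc 1 k, ((a-1) * (j i * sF a i) + j i))
          + b * ∑ i ∈ Finset.Icc 1 k, (j i * sF a i) := by
            rw [← Finset.mul_sum, ← Finset.mul_sum]
      _ = c * ((a-1) * (∑ i ∈ Finset.Icc 1 k, j i * sF a i) + ∑ i ∈ Finset.Icc 1 k, j i)
          + b * ∑ i ∈ Finset.Icc 1 k, (j i * sF a i) := by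
            rw [Finset.sum_add_distrib, ← Finset.mul_sum]
      _ = c * ((a-1) * l + ∑ i ∈ Finset.Icc 1 k, j i) + b * l := by rw [← hsum]
  constructor
  · -- membership
    constructor
    · intro S hS
      obtain ⟨hStheta, hcS⟩ := hS
      exact sum_mem_theta a b S hStheta _ _
        (fun i _ => nsmul_mem_theta a b S hStheta _ (tF_mem a b c ha hc1 S hStheta hcS i) (j i))
    · rw [hxl, Nat.mul_add_mod]
  · -- lower bound
    rintro x ⟨hxG, hxmod⟩
    obtain ⟨M, hxM⟩ := gset_rep a b c x hxG
    have hx : x = c * (M.map (a ^ ·)).sum + b * (M.map (sF a)).sum := by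
      rw [hxM, cost_split]
    set L := (M.map (sF a)).sum with hL_def
    have hmod : (b * L) % c = (b * l) % c := by
      rw [← hxmod, hx, Nat.mul_add_mod]
    have hLl : L % c = l % c :=
      (Nat.ModEq.cancel_left_of_coprime (by rwa [Nat.gcd_comm] at hcop) hmod)
    have hlc : l < c := by omega
    have hlL : l ≤ L := by
      by_contra h
      push_neg at h
      rw [Nat.mod_eq_of_lt (by omega), Nat.mod_eq_of_lt hlc] at hLl
      omega
    obtain ⟨M1, hM1v, hM1c⟩ := descent a b c (L - l) M l (by omega)
    set M2 := M1.filter (0 < ·) with hM2_def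
    have hdec : M1 = M2 + M1.filter (¬ 0 < ·) := by
      rw [hM2_def, Multiset.filter_add_not]
    have hM2v : (M2.map (sF a)).sum = l := by
      have : (M1.map (sF a)).sum
          = (M2.map (sF a)).sum + ((M1.filter (¬ 0 < ·)).map (sF a)).sum := by
        conv_lhs => rw [hdec]
        rw [Multiset.map_add, Multiset.sum_add]
      have hz : ((M1.filter (¬ 0 < ·)).map (sF a)).sum = 0 := by
        apply Multiset.sum_eq_zero
        intro y hy
        obtain ⟨z, hz, rfl⟩ := Multiset.mem_map.1 hy
        have : ¬ 0 < z := by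
          have := Multiset.mem_filter.1 hz
          simpa using this.2
        have : z = 0 := by omega
        rw [this, sF_zero]
      omega
    have hM2c : (M2.map (tF a b c)).sum ≤ (M1.map (tF a b c)).sum := by
      conv_rhs => rw [hdec]
      rw [Multiset.map_add, Multiset.sum_add]
      omega
    have hM2mem : ∀ y ∈ M2, 1 ≤ y := by
      intro y hy
      have := Multiset.mem_filter.1 hy
      omega
    have hT := Tprime a ha l hl1 k hk j hj hsum.symm M2 hM2mem hM2v
    have hcost2 : (M2.map (tF a b c)).sum = c * ((a-1) * l + M2.card) + b * l := by
      rw [cost_split, pcount a ha, hM2v]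
    have hxlow : c * ((a-1) * l + ∑ i ∈ Finset.Icc 1 k, j i) + b * l
        ≤ c * ((a-1) * l + M2.card) + b * l := by
      have := Nat.mul_le_mul_left c (Nat.add_le_add_left hT ((a-1)*l))
      omega
    rw [hxl, hx]
    calc c * ((a-1) * l + ∑ i ∈ Finset.Icc 1 k, j i) + b * l
        ≤ c * ((a-1) * l + M2.card) + b * l := hxlow
      _ = (M2.map (tF a b c)).sum := hcost2.symm
      _ ≤ (M1.map (tF a b c)).sum := hM2c
      _ ≤ (M.map (tF a b c)).sum := hM1c
      _ = c * (M.map (a ^ ·)).sum + b * L := by rw [cost_split]
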